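/- Let q be a positive integer, φ₁,…,φ_N reals, c₁,…,c_N complex with |c_n| ≤ a_n where a_n ≥ 0. Define the Fejér kernel K_T(t) = (1 − |t|/T)·𝟙_{|t| ≤ T}. Then for any real H and T > 0, ∫_ℝ K_T(t − H) |∑_{n=1}^N c_n e^{i t φ_n}|^{2q} dt ≤ ∫_ℝ K_T(t) |∑_{n=1}^N a_n e^{i t φ_n}|^{2q} dt. -/

import Mathlib

open MeasureTheory Complex

noncomputable def KT (T t : ℝ) : ℝ := if |t| ≤ T then 1 - |t| / T else 0

lemma KT_neg (T t : ℝ) : KT T (-t) = KT T t := by simp [KT]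

lemma KT_nonneg {T : ℝ} (hT : 0 < T) (t : ℝ) : 0 ≤ KT T t := by
  unfold KT; split
  · have h : |t| / T ≤ 1 := (div_le_one hT).2 (by assumption)
    linarith
  · exact le_refl 0

lemma KT_eq_indicator (T : ℝ) :
    KT T = Set.indicator (Set.Icc (-T) T) (fun t => 1 - |t| / T) := by
  funext t
  simp only [KT, Set.indicator_apply, Set.mem_Icc, ← abs_le]

lemma integrable_KT {T : ℝ} (hT : 0 < T) : Integrable (KT T) := by
  rw [KT_eq_indicator]
  rw [integrable_indicator_iff measurableSet_Icc]
  exact (Continuous.integrableOn_Icc (by continuity))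

lemma fejer_interval_nonneg {T : ℝ} (hT : 0 < T) (l : ℝ) :
    0 ≤ ∫ t in (0:ℝ)..T, (1 - t / T) * Real.cos (t * l) := by
  rcases eq_or_ne l 0 with rfl | hl
  · simp only [mul_zero, Real.cos_zero, mul_one]
    rw [intervalIntegral.integral_eq_sub_of_hasDerivAt (f := fun t => t - t^2/(2*T))
      (f' := fun t => 1 - t / T) (fun t _ => by
        have h1 : HasDerivAt (fun t : ℝ => t - t^2/(2*T)) (1 - (2*t)/(2*T)) t := by
          simpa [Pi.sub_def] using (hasDerivAt_id t).sub (((hasDerivAt_pow 2 t)).div_const (2*T))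
        refine h1.congr_deriv ?_
        rw [mul_div_mul_left _ _ two_ne_zero])
      ((by continuity : Continuous fun t : ℝ => 1 - t / T).intervalIntegrable _ _)]
    have : T - T^2/(2*T) = T/2 := by field_simp; ring
    rw [this]
    have : (0:ℝ) - 0^2/(2*T) = 0 := by simp
    rw [this]
    linarith
  · have hTl : 0 < T * l^2 := by positivity
    rw [intervalIntegral.integral_eq_sub_of_hasDerivAt
      (f := fun t => (1 - t/T) * Real.sin (t*l) / l - Real.cos (t*l) / (T*l^2))
      (f' := fun t => (1 - t / T) * Real.cos (t * l)) (fun t _ => by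
        have hsin : HasDerivAt (fun t : ℝ => Real.sin (t*l)) (Real.cos (t*l) * l) t :=
          by simpa [Function.comp_def] using (Real.hasDerivAt_sin (t*l)).comp t ((hasDerivAt_id t).mul_const l)
        have hcos : HasDerivAt (fun t : ℝ => Real.cos (t*l)) (-Real.sin (t*l) * l) t :=
          by simpa [Function.comp_def] using (Real.hasDerivAt_cos (t*l)).comp t ((hasDerivAt_id t).mul_const l)
        have hlin : HasDerivAt (fun t : ℝ => 1 - t/T) (-(1/T)) t := by
          simpa [Pi.sub_def] using (hasDerivAt_const t (1:ℝ)).sub ((hasDerivAt_id t).div_const T)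
        have h : HasDerivAt (fun t : ℝ => (1 - t/T) * Real.sin (t*l) / l - Real.cos (t*l) / (T*l^2)) _ t :=
          ((hlin.mul hsin).div_const l).sub (hcos.div_const (T*l^2))
        refine h.congr_deriv ?_
        have := hT.ne'
        field_simp; ring)
      ((by continuity : Continuous fun t : ℝ => (1 - t / T) * Real.cos (t * l)).intervalIntegrable _ _)]
    have h1 : Real.cos (T*l) ≤ 1 := Real.cos_le_one _
    simp only [zero_mul, Real.sin_zero, Real.cos_zero]
    have heq : (1 - T/T) * Real.sin (T*l) / l - Real.cos (T*l) / (T*l^2)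
        - ((1 - 0/T)*0/l - 1/(T*l^2)) = (1 - Real.cos (T*l))/(T*l^2) := by
      rw [div_self hT.ne']
      field_simp
      ring
    rw [heq]
    apply div_nonneg (by linarith) (le_of_lt hTl)

noncomputable def Phi (T l : ℝ) : ℝ := ∫ t : ℝ, KT T t * Real.cos (t * l)

lemma Phi_nonneg {T : ℝ} (hT : 0 < T) (l : ℝ) : 0 ≤ Phi T l := by
  have h0 : (fun t => KT T t * Real.cos (t * l))
      = Set.indicator (Set.Icc (-T) T) (fun t => (1 - |t| / T) * Real.cos (t * l)) := by
    funext t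
    rw [KT_eq_indicator]
    by_cases h : t ∈ Set.Icc (-T) T <;> simp [Set.indicator_apply, h]
  unfold Phi
  rw [h0, integral_indicator measurableSet_Icc, integral_Icc_eq_integral_Ioc,
    ← intervalIntegral.integral_of_le (by linarith : -T ≤ T)]
  have hcont : Continuous fun t : ℝ => (1 - |t| / T) * Real.cos (t * l) := by continuity
  rw [← intervalIntegral.integral_add_adjacent_intervals (a := -T) (b := 0) (c := T)
    (hcont.intervalIntegrable _ _) (hcont.intervalIntegrable _ _)]
  have hneg : ∫ x in (-T)..(0:ℝ), (1 - |x| / T) * Real.cos (x * l)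
      = ∫ x in (0:ℝ)..T, (1 - |x| / T) * Real.cos (x * l) := by
    have h := intervalIntegral.integral_comp_neg (a := (0:ℝ)) (b := T)
      (fun x => (1 - |x| / T) * Real.cos (x * l))
    simp only [abs_neg, neg_mul, Real.cos_neg, neg_zero] at h
    exact h.symm
  have habs : ∫ x in (0:ℝ)..T, (1 - |x| / T) * Real.cos (x * l)
      = ∫ x in (0:ℝ)..T, (1 - x / T) * Real.cos (x * l) :=
    intervalIntegral.integral_congr (fun x hx => by
      rw [Set.uIcc_of_le (by linarith : (0:ℝ) ≤ T)] at hx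
      rw [_root_.abs_of_nonneg hx.1])
  rw [hneg, habs]
  linarith [fejer_interval_nonneg hT l]

lemma integrable_KT_mul {T : ℝ} (hT : 0 < T) (H : ℝ) (f : ℝ → ℂ) (hf : Continuous f)
    (C : ℝ) (hC : ∀ t, ‖f t‖ ≤ C) :
    Integrable fun t : ℝ => (KT T (t - H) : ℂ) * f t := by
  have hK : Integrable fun t : ℝ => ((KT T (t - H) : ℝ) : ℂ) :=
    ((integrable_KT hT).comp_sub_right H).ofReal
  exact (hK.bdd_mul hf.aestronglyMeasurable (Filter.Eventually.of_forall hC)).congr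
    (Filter.Eventually.of_forall fun t => mul_comm _ _)

lemma cont_exp_I (l : ℝ) : Continuous fun t : ℝ => Complex.exp (Complex.I * t * l) := by
  fun_prop

lemma norm_exp_I (t l : ℝ) : ‖Complex.exp (Complex.I * t * l)‖ = 1 := by
  rw [show Complex.I * t * l = ((t * l : ℝ) : ℂ) * Complex.I by push_cast; ring]
  exact Complex.norm_exp_ofReal_mul_I _

lemma fejer_complex {T : ℝ} (hT : 0 < T) (H l : ℝ) :
    (∫ t : ℝ, (KT T (t - H) : ℂ) * Complex.exp (Complex.I * t * l))
      = Complex.exp (Complex.I * H * l) * (Phi T l : ℂ) := by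
  have hshift : (∫ t : ℝ, (KT T (t - H) : ℂ) * Complex.exp (Complex.I * t * l))
      = ∫ t : ℝ, (KT T t : ℂ) * Complex.exp (Complex.I * (t + H) * l) := by
    rw [← integral_sub_right_eq_self
      (fun t : ℝ => (KT T t : ℂ) * Complex.exp (Complex.I * ((t : ℝ) + H) * l)) H]
    congr 1; funext t
    congr 2
    push_cast
    ring
  rw [hshift]
  have hexp : ∀ t : ℝ, ((KT T t : ℂ)) * Complex.exp (Complex.I * ((t:ℝ) + H) * l)
      = Complex.exp (Complex.I * H * l) * ((KT T t : ℂ) * Complex.exp (Complex.I * t * l)) := by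
    intro t
    rw [show (Complex.I * ((t:ℝ) + H) * l : ℂ) = Complex.I * H * l + Complex.I * t * l by
      push_cast; ring, Complex.exp_add]
    ring
  simp_rw [hexp]
  rw [integral_const_mul]
  congr 1
  have hint : Integrable fun t : ℝ => (KT T t : ℂ) * Complex.exp (Complex.I * t * l) := by
    have := integrable_KT_mul hT 0 (fun t : ℝ => Complex.exp (Complex.I * t * l))
      (cont_exp_I l) 1 (fun t => le_of_eq (norm_exp_I t l))
    simpa using this
  set Ψ := ∫ t : ℝ, (KT T t : ℂ) * Complex.exp (Complex.I * t * l) with hΨ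
  have hconj : (starRingEnd ℂ) Ψ = Ψ := by
    rw [hΨ, ← integral_conj]
    have key : ∀ t : ℝ, (starRingEnd ℂ) ((KT T t : ℂ) * Complex.exp (Complex.I * t * l))
        = (fun s : ℝ => (KT T s : ℂ) * Complex.exp (Complex.I * s * l)) (-t) := by
      intro t
      show _ = (KT T (-t) : ℂ) * Complex.exp (Complex.I * (-t : ℝ) * l)
      rw [KT_neg, map_mul, Complex.conj_ofReal, ← Complex.exp_conj]
      congr 1
      push_cast
      simp [Complex.conj_I]
    simp_rw [key]
    exact integral_neg_eq_self (fun s : ℝ => (KT T s : ℂ) * Complex.exp (Complex.I * s * l)) volume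
  have hre : (Ψ.re : ℂ) = Ψ := Complex.conj_eq_iff_re.mp hconj
  rw [← hre]
  congr 1
  have h2 := integral_re hint
  simp only [RCLike.re_to_complex] at h2
  rw [hΨ]
  unfold Phi
  rw [← h2]
  congr 1
  funext t
  rw [show Complex.I * t * l = ((t * l : ℝ) : ℂ) * Complex.I by push_cast; ring]
  rw [Complex.re_ofReal_mul, Complex.exp_ofReal_mul_I_re]

lemma sum_pow_expand {N : ℕ} (q : ℕ) (b : Fin N → ℂ) (φ : Fin N → ℝ) (t : ℝ) :
    (∑ n, b n * Complex.exp (Complex.I * t * φ n)) ^ q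
      = ∑ m : Fin q → Fin N, (∏ j, b (m j))
          * Complex.exp (Complex.I * t * (∑ j, φ (m j))) := by
  rw [Finset.sum_pow', Fintype.piFinset_univ]
  apply Finset.sum_congr rfl
  intro m _
  rw [Finset.prod_mul_distrib]
  congr 1
  rw [← Complex.exp_sum]
  congr 1
  push_cast
  rw [Finset.mul_sum]

lemma expand_prod {N : ℕ} (q : ℕ) (b : Fin N → ℂ) (φ : Fin N → ℝ) (t : ℝ) :
    ((∑ n, b n * Complex.exp (Complex.I * t * φ n)) ^ q)
      * (starRingEnd ℂ) ((∑ n, b n * Complex.exp (Complex.I * t * φ n)) ^ q)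
    = ∑ m : Fin q → Fin N, ∑ m' : Fin q → Fin N,
        (∏ j, b (m j)) * (starRingEnd ℂ) (∏ j, b (m' j)) *
          Complex.exp (Complex.I * t * ((((∑ j, φ (m j)) - ∑ j, φ (m' j) : ℝ)) : ℂ)) := by
  rw [sum_pow_expand, map_sum, Finset.sum_mul_sum]
  apply Finset.sum_congr rfl; intro m _
  apply Finset.sum_congr rfl; intro m' _
  rw [map_mul, ← Complex.exp_conj]
  have hc : (starRingEnd ℂ) (Complex.I * t * (∑ j, φ (m' j)))
      = -(Complex.I * t * (∑ j, φ (m' j))) := by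
    simp [Complex.conj_I, Complex.conj_ofReal]
  rw [hc, mul_mul_mul_comm]
  congr 1
  rw [← Complex.exp_add]
  congr 1
  push_cast
  ring

set_option maxHeartbeats 1000000 in
lemma key_expand (q N : ℕ) (φ : Fin N → ℝ) (b : Fin N → ℂ) (T H : ℝ) (hT : 0 < T) :
    (∫ t : ℝ, KT T (t - H) * ‖∑ n, b n * Complex.exp (Complex.I * t * φ n)‖ ^ (2 * q))
      = (∑ m : Fin q → Fin N, ∑ m' : Fin q → Fin N,
          (∏ j, b (m j)) * (starRingEnd ℂ) (∏ j, b (m' j)) *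
            (Complex.exp (Complex.I * H * ((((∑ j, φ (m j)) - ∑ j, φ (m' j) : ℝ)) : ℂ)) *
              ((Phi T ((∑ j, φ (m j)) - ∑ j, φ (m' j)) : ℝ) : ℂ))).re := by
  classical
  have hpoint : ∀ t : ℝ, KT T (t - H) * ‖∑ n, b n * Complex.exp (Complex.I * t * φ n)‖ ^ (2 * q)
      = ((KT T (t - H) : ℂ) * (((∑ n, b n * Complex.exp (Complex.I * t * φ n)) ^ q)
          * (starRingEnd ℂ) ((∑ n, b n * Complex.exp (Complex.I * t * φ n)) ^ q))).re := by
    intro t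
    have h1 : ((∑ n, b n * Complex.exp (Complex.I * t * φ n)) ^ q)
        * (starRingEnd ℂ) ((∑ n, b n * Complex.exp (Complex.I * t * φ n)) ^ q)
        = ((‖∑ n, b n * Complex.exp (Complex.I * t * φ n)‖ ^ (2 * q) : ℝ) : ℂ) := by
      rw [Complex.mul_conj', ← Complex.ofReal_pow, norm_pow, ← pow_mul, mul_comm q 2]
    rw [h1, ← Complex.ofReal_mul, Complex.ofReal_re]
  have hcont : ∀ l : ℝ, Continuous fun t : ℝ =>
      ((∑ n, b n * Complex.exp (Complex.I * t * φ n)) ^ q)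
        * (starRingEnd ℂ) ((∑ n, b n * Complex.exp (Complex.I * t * φ n)) ^ q) := by
    intro l
    have hS : Continuous fun t : ℝ => ∑ n, b n * Complex.exp (Complex.I * t * φ n) := by fun_prop
    exact (hS.pow q).mul ((hS.pow q).star)
  have hint : Integrable fun t : ℝ => (KT T (t - H) : ℂ)
      * (((∑ n, b n * Complex.exp (Complex.I * t * φ n)) ^ q)
        * (starRingEnd ℂ) ((∑ n, b n * Complex.exp (Complex.I * t * φ n)) ^ q)) := by
    apply integrable_KT_mul hT H _ (hcont 0) ((∑ n, ‖b n‖) ^ (2 * q))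
    intro t
    have hb : ‖∑ n, b n * Complex.exp (Complex.I * t * φ n)‖ ≤ ∑ n, ‖b n‖ := by
      refine (norm_sum_le _ _).trans (le_of_eq ?_)
      apply Finset.sum_congr rfl
      intro n _
      rw [norm_mul, norm_exp_I, mul_one]
    calc ‖((∑ n, b n * Complex.exp (Complex.I * t * φ n)) ^ q)
          * (starRingEnd ℂ) ((∑ n, b n * Complex.exp (Complex.I * t * φ n)) ^ q)‖
        = ‖∑ n, b n * Complex.exp (Complex.I * t * φ n)‖ ^ (2 * q) := by
          rw [norm_mul, RCLike.norm_conj, norm_pow, ← pow_add, two_mul]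
      _ ≤ (∑ n, ‖b n‖) ^ (2 * q) :=
          pow_le_pow_left₀ (norm_nonneg _) hb _
  have hint2 : ∀ (m m' : Fin q → Fin N), Integrable fun t : ℝ =>
      (∏ j, b (m j)) * (starRingEnd ℂ) (∏ j, b (m' j)) *
        ((KT T (t - H) : ℂ) * Complex.exp (Complex.I * t * ((((∑ j, φ (m j)) - ∑ j, φ (m' j) : ℝ)) : ℂ))) := by
    intro m m'
    have h := integrable_KT_mul hT H
      (fun t : ℝ => Complex.exp (Complex.I * t * ((((∑ j, φ (m j)) - ∑ j, φ (m' j) : ℝ)) : ℂ)))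
      (cont_exp_I _) 1 (fun t => le_of_eq (norm_exp_I t _))
    exact h.const_mul ((∏ j, b (m j)) * (starRingEnd ℂ) (∏ j, b (m' j)))
  calc (∫ t : ℝ, KT T (t - H) * ‖∑ n, b n * Complex.exp (Complex.I * t * φ n)‖ ^ (2 * q))
      = ∫ t : ℝ, ((KT T (t - H) : ℂ) * (((∑ n, b n * Complex.exp (Complex.I * t * φ n)) ^ q)
          * (starRingEnd ℂ) ((∑ n, b n * Complex.exp (Complex.I * t * φ n)) ^ q))).re := by
        congr 1
        funext t
        exact hpoint t
    _ = (∫ t : ℝ, (KT T (t - H) : ℂ) * (((∑ n, b n * Complex.exp (Complex.I * t * φ n)) ^ q)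
          * (starRingEnd ℂ) ((∑ n, b n * Complex.exp (Complex.I * t * φ n)) ^ q))).re := by
        have := integral_re hint
        simpa only [RCLike.re_to_complex] using this
    _ = (∑ m : Fin q → Fin N, ∑ m' : Fin q → Fin N,
          (∏ j, b (m j)) * (starRingEnd ℂ) (∏ j, b (m' j)) *
            (Complex.exp (Complex.I * H * ((((∑ j, φ (m j)) - ∑ j, φ (m' j) : ℝ)) : ℂ)) *
              ((Phi T ((∑ j, φ (m j)) - ∑ j, φ (m' j)) : ℝ) : ℂ))).re := by
        congr 1
        have hexpand : ∀ t : ℝ, (KT T (t - H) : ℂ)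
            * (((∑ n, b n * Complex.exp (Complex.I * t * φ n)) ^ q)
              * (starRingEnd ℂ) ((∑ n, b n * Complex.exp (Complex.I * t * φ n)) ^ q))
            = ∑ m : Fin q → Fin N, ∑ m' : Fin q → Fin N,
                (∏ j, b (m j)) * (starRingEnd ℂ) (∏ j, b (m' j)) *
                  ((KT T (t - H) : ℂ) * Complex.exp (Complex.I * t * ((((∑ j, φ (m j)) - ∑ j, φ (m' j) : ℝ)) : ℂ))) := by
          intro t
          rw [expand_prod, Finset.mul_sum]
          apply Finset.sum_congr rfl; intro m _
          rw [Finset.mul_sum]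
          apply Finset.sum_congr rfl; intro m' _
          ring
        simp only [hexpand]
        rw [integral_finset_sum _ (fun m _ => integrable_finset_sum _ (fun m' _ => hint2 m m'))]
        apply Finset.sum_congr rfl; intro m _
        rw [integral_finset_sum _ (fun m' _ => hint2 m m')]
        apply Finset.sum_congr rfl; intro m' _
        rw [integral_const_mul, fejer_complex hT H _]

theorem stmt_3 (q : ℕ) (hq : 0 < q) (N : ℕ) (φ : Fin N → ℝ) (c : Fin N → ℂ)
    (a : Fin N → ℝ) (ha : ∀ n, 0 ≤ a n) (hca : ∀ n, ‖c n‖ ≤ a n)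
    (T H : ℝ) (hT : 0 < T)
    (K : ℝ → ℝ) (hK : ∀ t, K t = if |t| ≤ T then 1 - |t| / T else 0) :
    (∫ t : ℝ, K (t - H) * ‖∑ n, c n * Complex.exp (Complex.I * t * φ n)‖ ^ (2 * q)) ≤
      ∫ t : ℝ, K t * ‖∑ n, (a n : ℂ) * Complex.exp (Complex.I * t * φ n)‖ ^ (2 * q) := by
  have hKeq : K = KT T := funext fun t => by rw [hK]; rfl
  subst hKeq
  have hL := key_expand q N φ c T H hT
  have hR := key_expand q N φ (fun n => (a n : ℂ)) T 0 hT
  simp only [sub_zero, Complex.ofReal_zero, mul_zero, zero_mul, Complex.exp_zero, one_mul] at hR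
  rw [hL, hR]
  have hterm_a : ∀ m m' : Fin q → Fin N,
      (∏ j, ((a (m j) : ℂ))) * (starRingEnd ℂ) (∏ j, ((a (m' j) : ℂ))) *
        ((Phi T ((∑ j, φ (m j)) - ∑ j, φ (m' j)) : ℝ) : ℂ)
      = ((((∏ j, a (m j)) * (∏ j, a (m' j)) * Phi T ((∑ j, φ (m j)) - ∑ j, φ (m' j))) : ℝ) : ℂ) := by
    intro m m'
    have hconjprod : (starRingEnd ℂ) (∏ j, ((a (m' j) : ℂ))) = ∏ j, ((a (m' j) : ℂ)) := by
      rw [← Complex.ofReal_prod, Complex.conj_ofReal]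
    rw [hconjprod]
    push_cast
    ring
  have hRa : (∑ m : Fin q → Fin N, ∑ m' : Fin q → Fin N,
        (∏ j, ((a (m j) : ℂ))) * (starRingEnd ℂ) (∏ j, ((a (m' j) : ℂ))) *
          ((Phi T ((∑ j, φ (m j)) - ∑ j, φ (m' j)) : ℝ) : ℂ)).re
      = ∑ m : Fin q → Fin N, ∑ m' : Fin q → Fin N,
          (∏ j, a (m j)) * (∏ j, a (m' j)) * Phi T ((∑ j, φ (m j)) - ∑ j, φ (m' j)) := by
    simp_rw [hterm_a]
    norm_cast
  rw [hRa]
  have hP : ∀ m : Fin q → Fin N, ‖∏ j, c (m j)‖ ≤ ∏ j, a (m j) := fun m => by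
    rw [norm_prod]
    exact Finset.prod_le_prod (fun j _ => norm_nonneg _) (fun j _ => hca (m j))
  have hA : ∀ m : Fin q → Fin N, (0:ℝ) ≤ ∏ j, a (m j) := fun m =>
    Finset.prod_nonneg fun j _ => ha (m j)
  have hterm_c : ∀ m m' : Fin q → Fin N,
      ‖(∏ j, c (m j)) * (starRingEnd ℂ) (∏ j, c (m' j)) *
        (Complex.exp (Complex.I * H * ((((∑ j, φ (m j)) - ∑ j, φ (m' j) : ℝ)) : ℂ)) *
          ((Phi T ((∑ j, φ (m j)) - ∑ j, φ (m' j)) : ℝ) : ℂ))‖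
      ≤ (∏ j, a (m j)) * (∏ j, a (m' j)) * Phi T ((∑ j, φ (m j)) - ∑ j, φ (m' j)) := by
    intro m m'
    rw [norm_mul, norm_mul, RCLike.norm_conj, norm_mul, norm_exp_I, one_mul,
      Complex.norm_real, Real.norm_eq_abs, _root_.abs_of_nonneg (Phi_nonneg hT _)]
    exact mul_le_mul_of_nonneg_right
      (mul_le_mul (hP m) (hP m') (norm_nonneg _) (hA m)) (Phi_nonneg hT _)
  calc (∑ m : Fin q → Fin N, ∑ m' : Fin q → Fin N,
        (∏ j, c (m j)) * (starRingEnd ℂ) (∏ j, c (m' j)) *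
          (Complex.exp (Complex.I * H * ((((∑ j, φ (m j)) - ∑ j, φ (m' j) : ℝ)) : ℂ)) *
            ((Phi T ((∑ j, φ (m j)) - ∑ j, φ (m' j)) : ℝ) : ℂ))).re
      ≤ ‖∑ m : Fin q → Fin N, ∑ m' : Fin q → Fin N,
        (∏ j, c (m j)) * (starRingEnd ℂ) (∏ j, c (m' j)) *
          (Complex.exp (Complex.I * H * ((((∑ j, φ (m j)) - ∑ j, φ (m' j) : ℝ)) : ℂ)) *
            ((Phi T ((∑ j, φ (m j)) - ∑ j, φ (m' j)) : ℝ) : ℂ))‖ := Complex.re_le_norm _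
    _ ≤ ∑ m : Fin q → Fin N, ‖∑ m' : Fin q → Fin N,
        (∏ j, c (m j)) * (starRingEnd ℂ) (∏ j, c (m' j)) *
          (Complex.exp (Complex.I * H * ((((∑ j, φ (m j)) - ∑ j, φ (m' j) : ℝ)) : ℂ)) *
            ((Phi T ((∑ j, φ (m j)) - ∑ j, φ (m' j)) : ℝ) : ℂ))‖ := norm_sum_le _ _
    _ ≤ ∑ m : Fin q → Fin N, ∑ m' : Fin q → Fin N,
        ‖(∏ j, c (m j)) * (starRingEnd ℂ) (∏ j, c (m' j)) *
          (Complex.exp (Complex.I * H * ((((∑ j, φ (m j)) - ∑ j, φ (m' j) : ℝ)) : ℂ)) *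
            ((Phi T ((∑ j, φ (m j)) - ∑ j, φ (m' j)) : ℝ) : ℂ))‖ :=
        Finset.sum_le_sum fun m _ => norm_sum_le _ _
    _ ≤ ∑ m : Fin q → Fin N, ∑ m' : Fin q → Fin N,
          (∏ j, a (m j)) * (∏ j, a (m' j)) * Phi T ((∑ j, φ (m j)) - ∑ j, φ (m' j)) :=
        Finset.sum_le_sum fun m _ => Finset.sum_le_sum fun m' _ => hterm_c m m'
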